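/- A linear dynamical system (A,C) of size (0,2,2) (A a 2×2 complex matrix, B the empty 2×0 matrix, C a 2×2 complex matrix) is indecomposable if and only if it is equivalent to the canonical form (J₂(λ), C = I₂) for some λ ∈ ℂ, where I₂ is the 2×2 identity matrix. -/

import Mathlib

open Matrix

/-- Two linear dynamical systems `(A,B,C)` and `(A',B',C')` of size `(m,n,l)` are
equivalent if there are invertible matrices `X, Y, Z` with
`A' = Y A Y⁻¹`, `B' = Y B X⁻¹`, `C' = Z C Y⁻¹`. -/
def SysEquiv {m n l : ℕ}
    (A : Matrix (Fin n) (Fin n) ℂ) (B : Matrix (Fin n) (Fin m) ℂ) (C : Matrix (Fin l) (Fin n) ℂ)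
    (A' : Matrix (Fin n) (Fin n) ℂ) (B' : Matrix (Fin n) (Fin m) ℂ) (C' : Matrix (Fin l) (Fin n) ℂ) :
    Prop :=
  ∃ (X : Matrix (Fin m) (Fin m) ℂ) (Y : Matrix (Fin n) (Fin n) ℂ) (Z : Matrix (Fin l) (Fin l) ℂ),
    IsUnit X ∧ IsUnit Y ∧ IsUnit Z ∧
      A' = Y * A * Y⁻¹ ∧ B' = Y * B * X⁻¹ ∧ C' = Z * C * Y⁻¹

/-- A system of size `(m,n,l)` is decomposable if it is equivalent to a direct sum
(block-diagonal) of two systems, each of nonzero total size. -/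
def Decomposable {m n l : ℕ}
    (A : Matrix (Fin n) (Fin n) ℂ) (B : Matrix (Fin n) (Fin m) ℂ)
    (C : Matrix (Fin l) (Fin n) ℂ) : Prop :=
  ∃ (m₁ m₂ n₁ n₂ l₁ l₂ : ℕ) (hm : m₁ + m₂ = m) (hn : n₁ + n₂ = n) (hl : l₁ + l₂ = l)
    (A₁ : Matrix (Fin n₁) (Fin n₁) ℂ) (B₁ : Matrix (Fin n₁) (Fin m₁) ℂ)
    (C₁ : Matrix (Fin l₁) (Fin n₁) ℂ)
    (A₂ : Matrix (Fin n₂) (Fin n₂) ℂ) (B₂ : Matrix (Fin n₂) (Fin m₂) ℂ)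
    (C₂ : Matrix (Fin l₂) (Fin n₂) ℂ),
    0 < m₁ + n₁ + l₁ ∧ 0 < m₂ + n₂ + l₂ ∧
      SysEquiv A B C
        (Matrix.reindex (finSumFinEquiv.trans (finCongr hn)) (finSumFinEquiv.trans (finCongr hn))
          (Matrix.fromBlocks A₁ 0 0 A₂))
        (Matrix.reindex (finSumFinEquiv.trans (finCongr hn)) (finSumFinEquiv.trans (finCongr hm))
          (Matrix.fromBlocks B₁ 0 0 B₂))
        (Matrix.reindex (finSumFinEquiv.trans (finCongr hl)) (finSumFinEquiv.trans (finCongr hn))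
          (Matrix.fromBlocks C₁ 0 0 C₂))

/-- A system is indecomposable if it is not decomposable. -/
def Indecomposable {m n l : ℕ}
    (A : Matrix (Fin n) (Fin n) ℂ) (B : Matrix (Fin n) (Fin m) ℂ)
    (C : Matrix (Fin l) (Fin n) ℂ) : Prop :=
  ¬ Decomposable A B C


private lemma detU {n : ℕ} {Y : Matrix (Fin n) (Fin n) ℂ} (h : IsUnit Y) : IsUnit Y.det :=
  (Matrix.isUnit_iff_isUnit_det Y).mp h

private lemma isUnit_inv2 {n : ℕ} {Y : Matrix (Fin n) (Fin n) ℂ} (h : IsUnit Y) : IsUnit Y⁻¹ :=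
  Matrix.isUnit_nonsing_inv_iff.mpr h

private lemma conj_comp {a b : ℕ} (W Y : Matrix (Fin a) (Fin a) ℂ) (V X : Matrix (Fin b) (Fin b) ℂ)
    (B : Matrix (Fin a) (Fin b) ℂ) :
    W * (Y * B * X⁻¹) * V⁻¹ = (W * Y) * B * (V * X)⁻¹ := by
  rw [Matrix.mul_inv_rev]; simp only [Matrix.mul_assoc]

private lemma conj_unsandwich {a b : ℕ} (Y : Matrix (Fin a) (Fin a) ℂ) (X : Matrix (Fin b) (Fin b) ℂ)
    (B : Matrix (Fin a) (Fin b) ℂ) (hY : IsUnit Y) (hX : IsUnit X) :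
    Y⁻¹ * (Y * B * X⁻¹) * (X⁻¹)⁻¹ = B := by
  rw [Matrix.nonsing_inv_nonsing_inv X (detU hX)]
  have h : Y⁻¹ * (Y * B * X⁻¹) * X = (Y⁻¹ * Y) * (B * (X⁻¹ * X)) := by
    simp only [Matrix.mul_assoc]
  rw [h, Matrix.nonsing_inv_mul Y (detU hY), Matrix.nonsing_inv_mul X (detU hX),
    Matrix.one_mul, Matrix.mul_one]

private lemma killRow (M : Matrix (Fin 2) (Fin 2) ℂ) (h : M.det = 0) :
    ∃ Z : Matrix (Fin 2) (Fin 2) ℂ, IsUnit Z ∧ (Z * M) 1 0 = 0 ∧ (Z * M) 1 1 = 0 := by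
  rw [Matrix.det_fin_two] at h
  by_cases h00 : M 0 0 ≠ 0
  · refine ⟨!![1, 0; M 1 0 / M 0 0, -1], ?_, ?_, ?_⟩
    · rw [Matrix.isUnit_iff_isUnit_det, Matrix.det_fin_two_of]
      simp [isUnit_iff_ne_zero]
    · simp [Matrix.mul_apply, Fin.sum_univ_two]
      field_simp; ring
    · simp [Matrix.mul_apply, Fin.sum_univ_two]
      field_simp
      linear_combination -h
  · push_neg at h00
    by_cases h01 : M 0 1 ≠ 0
    · have h10 : M 1 0 = 0 := by
        rw [h00] at h; simpa [h01] using h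
      refine ⟨!![1, 0; M 1 1 / M 0 1, -1], ?_, ?_, ?_⟩
      · rw [Matrix.isUnit_iff_isUnit_det, Matrix.det_fin_two_of]
        simp [isUnit_iff_ne_zero]
      · simp [Matrix.mul_apply, Fin.sum_univ_two, h00, h10]
      · simp [Matrix.mul_apply, Fin.sum_univ_two]
        field_simp; ring
    · push_neg at h01
      refine ⟨!![0, 1; 1, 0], ?_, ?_, ?_⟩
      · rw [Matrix.isUnit_iff_isUnit_det, Matrix.det_fin_two_of]
        simp [isUnit_iff_ne_zero]
      · simp [Matrix.mul_apply, Fin.sum_univ_two, h00]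
      · simp [Matrix.mul_apply, Fin.sum_univ_two, h01]

private lemma killCol (M : Matrix (Fin 2) (Fin 2) ℂ) (h : M.det = 0) :
    ∃ P : Matrix (Fin 2) (Fin 2) ℂ, IsUnit P ∧ (M * P) 0 1 = 0 ∧ (M * P) 1 1 = 0 := by
  obtain ⟨Z, hZ, h0, h1⟩ := killRow Mᵀ (by rw [Matrix.det_transpose]; exact h)
  refine ⟨Zᵀ, ?_, ?_, ?_⟩
  · rw [Matrix.isUnit_iff_isUnit_det, Matrix.det_transpose]
    exact detU hZ
  · simpa [Matrix.mul_apply, Fin.sum_univ_two, Matrix.transpose_apply, mul_comm] using h0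
  · simpa [Matrix.mul_apply, Fin.sum_univ_two, Matrix.transpose_apply, mul_comm] using h1

private lemma eig (A : Matrix (Fin 2) (Fin 2) ℂ) : ∃ lam : ℂ, (A - lam • 1).det = 0 := by
  obtain ⟨s, hs⟩ := IsAlgClosed.exists_pow_nat_eq
    ((A 0 0 + A 1 1) ^ 2 - 4 * (A 0 0 * A 1 1 - A 0 1 * A 1 0)) (n := 2) (by norm_num)
  refine ⟨(A 0 0 + A 1 1 + s) / 2, ?_⟩
  rw [Matrix.det_fin_two]
  simp only [Matrix.sub_apply, Matrix.smul_apply, Matrix.one_apply, smul_eq_mul]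
  norm_num
  linear_combination hs / 4

private lemma triangularize (A : Matrix (Fin 2) (Fin 2) ℂ) :
    ∃ (Y : Matrix (Fin 2) (Fin 2) ℂ) (a c lam : ℂ),
      IsUnit Y ∧ Y * A * Y⁻¹ = !![a, 0; c, lam] := by
  obtain ⟨lam, hlam⟩ := eig A
  obtain ⟨P, hP, h01, h11⟩ := killCol (A - lam • 1) hlam
  have hdP := detU hP
  have hPP : P⁻¹ * P = 1 := Matrix.nonsing_inv_mul P hdP
  have hAP0 : (A * P) 0 1 = lam * P 0 1 := by
    have := h01
    simp only [Matrix.sub_mul, Matrix.smul_mul, Matrix.one_mul, Matrix.sub_apply,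
      Matrix.smul_apply, smul_eq_mul] at this
    linear_combination this
  have hAP1 : (A * P) 1 1 = lam * P 1 1 := by
    have := h11
    simp only [Matrix.sub_mul, Matrix.smul_mul, Matrix.one_mul, Matrix.sub_apply,
      Matrix.smul_apply, smul_eq_mul] at this
    linear_combination this
  refine ⟨P⁻¹, (P⁻¹ * A * P) 0 0, (P⁻¹ * A * P) 1 0, lam, isUnit_inv2 hP, ?_⟩
  rw [Matrix.nonsing_inv_nonsing_inv P hdP]
  have e01 : (P⁻¹ * P) 0 1 = 0 := by rw [hPP]; simp [Matrix.one_apply]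
  have e11 : (P⁻¹ * P) 1 1 = 1 := by rw [hPP]; simp [Matrix.one_apply]
  simp only [Matrix.mul_apply, Fin.sum_univ_two] at hAP0 hAP1
  have hT01 : (P⁻¹ * A * P) 0 1 = 0 := by
    rw [Matrix.mul_assoc]
    simp only [Matrix.mul_apply, Fin.sum_univ_two] at e01 ⊢
    linear_combination P⁻¹ 0 0 * hAP0 + P⁻¹ 0 1 * hAP1 + lam * e01
  have hT11 : (P⁻¹ * A * P) 1 1 = lam := by
    rw [Matrix.mul_assoc]
    simp only [Matrix.mul_apply, Fin.sum_univ_two] at e11 ⊢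
    linear_combination P⁻¹ 1 0 * hAP0 + P⁻¹ 1 1 * hAP1 + lam * e11
  conv_lhs => rw [Matrix.eta_fin_two (P⁻¹ * A * P)]
  rw [hT01, hT11]

private lemma classify (A : Matrix (Fin 2) (Fin 2) ℂ) :
    (∃ (Y : Matrix (Fin 2) (Fin 2) ℂ) (lam : ℂ), IsUnit Y ∧ Y * A * Y⁻¹ = !![lam, 1; 0, lam]) ∨
    (∃ (Y : Matrix (Fin 2) (Fin 2) ℂ) (a d : ℂ), IsUnit Y ∧ Y * A * Y⁻¹ = !![a, 0; 0, d]) := by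
  obtain ⟨Y, a, c, lam, hY, hT⟩ := triangularize A
  by_cases hc : c = 0
  · right; exact ⟨Y, a, lam, hY, by rw [hT, hc]⟩
  by_cases ha : a = lam
  · -- Jordan case
    left
    set S : Matrix (Fin 2) (Fin 2) ℂ := !![0, c⁻¹; 1, 0] with hSdef
    have hS : IsUnit S := by
      rw [Matrix.isUnit_iff_isUnit_det, hSdef, Matrix.det_fin_two_of]
      simp [isUnit_iff_ne_zero, hc]
    have hSinv : S⁻¹ = !![0, 1; c, 0] := by
      apply Matrix.inv_eq_left_inv
      rw [hSdef, Matrix.mul_fin_two]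
      ext i j
      fin_cases i <;> fin_cases j <;> simp [Matrix.one_apply, hc]
    refine ⟨S * Y, lam, hS.mul hY, ?_⟩
    rw [← conj_comp, hT, ha, hSinv, hSdef, Matrix.mul_fin_two, Matrix.mul_fin_two]
    ext i j
    fin_cases i <;> fin_cases j <;> simp [hc] <;> field_simp
  · -- diagonal case
    right
    set k : ℂ := lam - a with hkdef
    have hk : k ≠ 0 := fun h => ha (by rw [hkdef] at h; linear_combination -h)
    set S : Matrix (Fin 2) (Fin 2) ℂ := !![k⁻¹, 0; c / k, 1] with hSdef
    have hS : IsUnit S := by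
      rw [Matrix.isUnit_iff_isUnit_det, hSdef, Matrix.det_fin_two_of]
      simp [isUnit_iff_ne_zero, hk]
    have key : S * !![a, 0; c, lam] = !![a, 0; 0, lam] * S := by
      rw [hSdef, Matrix.mul_fin_two, Matrix.mul_fin_two]
      ext i j
      fin_cases i <;> fin_cases j <;> simp [hkdef] <;> field_simp [sub_ne_zero.mpr (Ne.symm ha)] <;> ring
    refine ⟨S * Y, a, lam, hS.mul hY, ?_⟩
    rw [← conj_comp, hT, key, Matrix.mul_assoc, Matrix.mul_nonsing_inv S (detU hS),
      Matrix.mul_one]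

private lemma not_jordan_diag (lam a d : ℂ) (Y : Matrix (Fin 2) (Fin 2) ℂ) (hY : IsUnit Y)
    (h : !![a, 0; 0, d] = Y * !![lam, 1; 0, lam] * Y⁻¹) : False := by
  have hdY := detU hY
  have h2 : Y * !![lam, 1; 0, lam] = !![a, 0; 0, d] * Y := by
    rw [h, Matrix.mul_assoc, Matrix.mul_assoc, Matrix.nonsing_inv_mul Y hdY, Matrix.mul_one]
  have e00 : (Y * !![lam, 1; 0, lam]) 0 0 = (!![a, 0; 0, d] * Y) 0 0 := by rw [h2]
  have e01 : (Y * !![lam, 1; 0, lam]) 0 1 = (!![a, 0; 0, d] * Y) 0 1 := by rw [h2]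
  have e10 : (Y * !![lam, 1; 0, lam]) 1 0 = (!![a, 0; 0, d] * Y) 1 0 := by rw [h2]
  have e11 : (Y * !![lam, 1; 0, lam]) 1 1 = (!![a, 0; 0, d] * Y) 1 1 := by rw [h2]
  simp only [Matrix.mul_apply, Fin.sum_univ_two, Matrix.cons_val', Matrix.cons_val_zero,
    Matrix.cons_val_one, Matrix.head_cons, Matrix.head_fin_const, Matrix.empty_val',
    Matrix.cons_val_fin_one, Matrix.of_apply] at e00 e01 e10 e11
  -- e00 : Y 0 0 * lam + Y 0 1 * 0 = a * Y 0 0 + 0 * Y 1 0, etc.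
  have hY00 : Y 0 0 = 0 := by
    by_contra h0
    have hal : a = lam := by
      field_simp at e00
      rcases mul_eq_zero.mp (by linear_combination e00 : Y 0 0 * (lam - a) = 0) with h' | h'
      · exact absurd h' h0
      · linear_combination -h'
    apply h0
    rw [hal] at e01
    linear_combination e01
  have hY10 : Y 1 0 = 0 := by
    by_contra h0
    have hdl : d = lam := by
      rcases mul_eq_zero.mp (by linear_combination e10 : Y 1 0 * (lam - d) = 0) with h' | h'
      · exact absurd h' h0
      · linear_combination -h'
    apply h0
    rw [hdl] at e11
    linear_combination e11
  have : Y.det = 0 := by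
    rw [Matrix.det_fin_two, hY00, hY10]; ring
  rw [this] at hdY
  exact hdY.ne_zero rfl

private lemma sysEquiv_symm {m n l : ℕ}
    {A A' : Matrix (Fin n) (Fin n) ℂ} {B B' : Matrix (Fin n) (Fin m) ℂ}
    {C C' : Matrix (Fin l) (Fin n) ℂ}
    (h : SysEquiv A B C A' B' C') : SysEquiv A' B' C' A B C := by
  obtain ⟨X, Y, Z, hX, hY, hZ, hA, hB, hC⟩ := h
  exact ⟨X⁻¹, Y⁻¹, Z⁻¹, isUnit_inv2 hX, isUnit_inv2 hY, isUnit_inv2 hZ,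
    by rw [hA]; exact (conj_unsandwich Y Y A hY hY).symm,
    by rw [hB]; exact (conj_unsandwich Y X B hY hX).symm,
    by rw [hC]; exact (conj_unsandwich Z Y C hZ hY).symm⟩

private lemma sysEquiv_trans {m n l : ℕ}
    {A A' A'' : Matrix (Fin n) (Fin n) ℂ} {B B' B'' : Matrix (Fin n) (Fin m) ℂ}
    {C C' C'' : Matrix (Fin l) (Fin n) ℂ}
    (h1 : SysEquiv A B C A' B' C') (h2 : SysEquiv A' B' C' A'' B'' C'') :
    SysEquiv A B C A'' B'' C'' := by
  obtain ⟨X, Y, Z, hX, hY, hZ, hA, hB, hC⟩ := h1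
  obtain ⟨X', Y', Z', hX', hY', hZ', hA', hB', hC'⟩ := h2
  exact ⟨X' * X, Y' * Y, Z' * Z, hX'.mul hX, hY'.mul hY, hZ'.mul hZ,
    by rw [hA', hA, conj_comp],
    by rw [hB', hB, conj_comp],
    by rw [hC', hC, conj_comp]⟩

/-- a size (0,2,2) system is indecomposable iff it is equivalent to
(J₂(λ), C = I₂) for some λ. -/
theorem size_0_2_2_indecomposable_iff_canonical
    (A : Matrix (Fin 2) (Fin 2) ℂ) (C : Matrix (Fin 2) (Fin 2) ℂ) :
    Indecomposable A (0 : Matrix (Fin 2) (Fin 0) ℂ) C ↔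
      ∃ l : ℂ, SysEquiv A (0 : Matrix (Fin 2) (Fin 0) ℂ) C
        !![l, 1; 0, l] 0 (1 : Matrix (Fin 2) (Fin 2) ℂ) := by
  constructor
  · intro hInd
    have hC : IsUnit C := by
      by_contra hCn
      have hdet : C.det = 0 := by
        by_contra hd
        exact hCn ((Matrix.isUnit_iff_isUnit_det C).mpr (isUnit_iff_ne_zero.mpr hd))
      obtain ⟨Z, hZ, h10, h11⟩ := killRow C hdet
      apply hInd
      refine ⟨0, 0, 2, 0, 1, 1, rfl, rfl, rfl, A, 0, !![(Z * C) 0 0, (Z * C) 0 1],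
        0, 0, 0, by norm_num, by norm_num, 1, 1, Z, isUnit_one, isUnit_one, hZ, ?_, ?_, ?_⟩
      · rw [inv_one, Matrix.mul_one, Matrix.one_mul]
        ext i j
        fin_cases i <;> fin_cases j <;> rfl
      · ext i j
        exact j.elim0
      · rw [inv_one, Matrix.mul_one]
        ext i j
        fin_cases i <;> fin_cases j
        · rfl
        · rfl
        · exact h10.symm
        · exact h11.symm
    have hdC := detU hC
    rcases classify A with ⟨Y, lam, hY, hJ⟩ | ⟨Y, a, d, hY, hD⟩
    · refine ⟨lam, 1, Y, Y * C⁻¹, isUnit_one, hY,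
        hY.mul (Matrix.isUnit_nonsing_inv_iff.mpr hC), hJ.symm, ?_, ?_⟩
      · ext i j
        exact j.elim0
      · have h1 : Y * C⁻¹ * C * Y⁻¹ = 1 := by
          rw [Matrix.mul_assoc Y C⁻¹ C, Matrix.nonsing_inv_mul C hdC, Matrix.mul_one,
            Matrix.mul_nonsing_inv Y (detU hY)]
        exact h1.symm
    · exfalso
      apply hInd
      refine ⟨0, 0, 1, 1, 1, 1, rfl, rfl, rfl, !![a], 0, !![1], !![d], 0, !![1],
        by norm_num, by norm_num, 1, Y, Y * C⁻¹, isUnit_one, hY,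
        hY.mul (Matrix.isUnit_nonsing_inv_iff.mpr hC), ?_, ?_, ?_⟩
      · rw [hD]
        ext i j
        fin_cases i <;> fin_cases j <;> rfl
      · ext i j
        exact j.elim0
      · have h1 : Y * C⁻¹ * C * Y⁻¹ = 1 := by
          rw [Matrix.mul_assoc Y C⁻¹ C, Matrix.nonsing_inv_mul C hdC, Matrix.mul_one,
            Matrix.mul_nonsing_inv Y (detU hY)]
        rw [h1]
        ext i j
        fin_cases i <;> fin_cases j <;> rfl
  · rintro ⟨lam, heq⟩ hDec
    obtain ⟨m₁, m₂, n₁, n₂, l₁, l₂, hm, hn, hl, A₁, B₁, C₁, A₂, B₂, C₂, hpos1, hpos2, hsys⟩ := hDec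
    have hcomb := sysEquiv_trans (sysEquiv_symm heq) hsys
    obtain ⟨X, Y, Z, hX, hY, hZ, hA, hB, hC⟩ := hcomb
    obtain rfl : m₁ = 0 := by omega
    obtain rfl : m₂ = 0 := by omega
    have hU : IsUnit (Z * (1 : Matrix (Fin 2) (Fin 2) ℂ) * Y⁻¹) := by
      rw [Matrix.mul_one]
      exact hZ.mul (isUnit_inv2 hY)
    rw [← hC] at hU
    have hn1 : n₁ ≤ 2 := by omega
    have hl1 : l₁ ≤ 2 := by omega
    interval_cases n₁ <;> interval_cases l₁
    · exact absurd hpos1 (by norm_num)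
    · obtain rfl : n₂ = 2 := by omega
      obtain rfl : l₂ = 1 := by omega
      exact (detU hU).ne_zero
        (Matrix.det_eq_zero_of_row_eq_zero 0 (fun j => by fin_cases j <;> rfl))
    · obtain rfl : n₂ = 2 := by omega
      obtain rfl : l₂ = 0 := by omega
      exact (detU hU).ne_zero
        (Matrix.det_eq_zero_of_row_eq_zero 0 (fun j => by fin_cases j <;> rfl))
    · obtain rfl : n₂ = 1 := by omega
      obtain rfl : l₂ = 2 := by omega
      exact (detU hU).ne_zero
        (Matrix.det_eq_zero_of_column_eq_zero 0 (fun i => by fin_cases i <;> rfl))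
    · obtain rfl : n₂ = 1 := by omega
      obtain rfl : l₂ = 1 := by omega
      have hA2 : !![A₁ 0 0, 0; 0, A₂ 0 0] = Y * !![lam, 1; 0, lam] * Y⁻¹ := by
        rw [← hA]
        ext i j
        fin_cases i <;> fin_cases j <;> rfl
      exact not_jordan_diag lam _ _ Y hY hA2
    · obtain rfl : n₂ = 1 := by omega
      obtain rfl : l₂ = 0 := by omega
      exact (detU hU).ne_zero
        (Matrix.det_eq_zero_of_column_eq_zero 1 (fun i => by fin_cases i <;> rfl))
    · obtain rfl : n₂ = 0 := by omega
      obtain rfl : l₂ = 2 := by omega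
      exact (detU hU).ne_zero
        (Matrix.det_eq_zero_of_row_eq_zero 0 (fun j => by fin_cases j <;> rfl))
    · obtain rfl : n₂ = 0 := by omega
      obtain rfl : l₂ = 1 := by omega
      exact (detU hU).ne_zero
        (Matrix.det_eq_zero_of_row_eq_zero 1 (fun j => by fin_cases j <;> rfl))
    · obtain rfl : n₂ = 0 := by omega
      obtain rfl : l₂ = 0 := by omega
      exact absurd hpos2 (by norm_num)
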